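/- Let L_{αβ} be complex 1-forms on a manifold, symmetric (L_{αβ}=L_{βα}) and 𝔧-invariant, M^α complex 1-forms, N_s real 1-forms, and let {η₁,η₂,η₃, θ^α, θ^{ᾱ}, φ₀,...,φ₃} be pointwise linearly independent 1-forms. Suppose the five 2-form identities \eqref{str-eq-dif} hold: 0 = -iM^α∧η₁ - π^α_{σ̄}M^{σ̄}∧(η₂+iη₃) - π^{ασ}L_{σβ}∧θ^β; 0 = -N_s∧η_s - 2M_β∧θ^β - 2M_{β̄}∧θ^{β̄}; 0 = -N₂∧η₃+N₃∧η₂+2iM_β∧θ^β-2iM_{β̄}∧θ^{β̄}; 0 = -N₃∧η₁+N₁∧η₃-2π_{σβ}M^σ∧θ^β-2π_{σ̄β̄}M^{σ̄}∧θ^{β̄}; 0 = -N₁∧η₂+N₂∧η₁+2iπ_{σβ}M^σ∧θ^β-2iπ_{σ̄β̄}M^{σ̄}∧θ^{β̄}. Then L_{αβ} = 0, M^α = 0, and N_s = 0. -/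
import Mathlib


open Finset Complex

/-- Standard skew form on `ℂ^{2n}`. -/
def piStd (n : ℕ) : Matrix (Fin (2*n)) (Fin (2*n)) ℂ :=
  fun α β => (if (α : ℕ) + n = (β : ℕ) then 1 else 0) - (if (α : ℕ) = (β : ℕ) + n then 1 else 0)

/-- Complex conjugation of a complex-valued 1-form. -/
noncomputable def conjForm {V : Type*} [AddCommGroup V] [Module ℝ V]
    (f : V →ₗ[ℝ] ℂ) : V →ₗ[ℝ] ℂ :=
  Complex.conjAe.toLinearMap.comp f

/-- Coercion of a real-valued 1-form to a complex-valued one. -/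
noncomputable def cForm {V : Type*} [AddCommGroup V] [Module ℝ V]
    (f : V →ₗ[ℝ] ℝ) : V →ₗ[ℝ] ℂ :=
  (Algebra.linearMap ℝ ℂ).comp f

lemma sum_piStd_lt {n : ℕ} (α : Fin (2*n)) (hα : (α:ℕ) < n) (f : Fin (2*n) → ℂ) :
    ∑ β, piStd n α β * f β = f ⟨(α:ℕ) + n, by omega⟩ := by
  rw [Finset.sum_eq_single (⟨(α:ℕ) + n, by omega⟩ : Fin (2*n))]
  · have : ¬ ((α:ℕ) = (α:ℕ) + n + n) := by omega
    simp [piStd, this]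
  · intro b _ hb
    have hb' : (α:ℕ) + n ≠ (b:ℕ) := by
      intro h; apply hb; exact Fin.ext h.symm
    have : ¬ ((α:ℕ) = (b:ℕ) + n) := by omega
    simp [piStd, hb', this]
  · simp

lemma sum_piStd_ge {n : ℕ} (α : Fin (2*n)) (hα : n ≤ (α:ℕ)) (f : Fin (2*n) → ℂ) :
    ∑ β, piStd n α β * f β = -f ⟨(α:ℕ) - n, by omega⟩ := by
  have h2 : (α:ℕ) < 2*n := α.isLt
  rw [Finset.sum_eq_single (⟨(α:ℕ) - n, by omega⟩ : Fin (2*n))]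
  · have h1 : ¬ ((α:ℕ) + n = (α:ℕ) - n) := by omega
    have h3 : (α:ℕ) = ((α:ℕ) - n) + n := by omega
    simp only [piStd, if_neg h1, if_pos h3]
    ring
  · intro b _ hb
    have hb' : (α:ℕ) - n ≠ (b:ℕ) := by
      intro h; apply hb; exact Fin.ext h.symm
    have h4 : ¬ ((α:ℕ) + n = (b:ℕ)) := by omega
    have h5 : ¬ ((α:ℕ) = (b:ℕ) + n) := by omega
    simp [piStd, h4, h5]
  · simp

lemma piStd_cancel {n : ℕ} (x : Fin (2*n) → ℂ)
    (h : ∀ α, ∑ σ, piStd n α σ * x σ = 0) : ∀ σ, x σ = 0 := by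
  intro σ
  rcases lt_or_ge (σ:ℕ) n with hσ | hσ
  · have := h ⟨(σ:ℕ) + n, by omega⟩
    rw [sum_piStd_ge _ (by simp) ] at this
    simpa using this
  · have h2 : (σ:ℕ) < 2*n := σ.isLt
    have := h ⟨(σ:ℕ) - n, by omega⟩
    rw [sum_piStd_lt _ (by simp; omega)] at this
    have he : (⟨(σ:ℕ) - n + n, by omega⟩ : Fin (2*n)) = σ := by
      apply Fin.ext; simp; omega
    rw [he] at this
    exact this

lemma coefident (a b : ℝ) (z : ℂ) :
    (((a:ℂ) - Complex.I*b)/2) * z + (((a:ℂ) + Complex.I*b)/2) * ((starRingEnd ℂ) z)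
      = ((a * z.re + b * z.im : ℝ) : ℂ) := by
  have hz := Complex.re_add_im z
  have h2 : (starRingEnd ℂ) z = (z.re:ℂ) - z.im * Complex.I := by
    apply Complex.ext <;> simp
  push_cast
  linear_combination (-((a:ℂ) - Complex.I*b)/2) * hz + (((a:ℂ) + Complex.I*b)/2) * h2
    - ((b:ℂ)*(z.im:ℂ)) * Complex.I_sq

theorem dualvec (n : ℕ) (V : Type*) [AddCommGroup V] [Module ℝ V]
    (η : Fin 3 → V →ₗ[ℝ] ℝ) (θ : Fin (2*n) → V →ₗ[ℝ] ℂ) (φf : Fin 4 → V →ₗ[ℝ] ℝ)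
    (hindep : LinearIndependent ℂ
      (Sum.elim (fun s : Fin 3 => cForm (η s))
        (Sum.elim θ
          (Sum.elim (fun α : Fin (2*n) => conjForm (θ α))
            (fun j : Fin 4 => cForm (φf j)))))) :
    ∀ (x : Fin 3 → ℝ) (z : Fin (2*n) → ℂ), ∃ v : V,
      (∀ s, η s v = x s) ∧ (∀ γ, θ γ v = z γ) := by
  classical
  set T : V →ₗ[ℝ] ((Fin 3 → ℝ) × (Fin (2*n) → ℂ)) :=
    LinearMap.prod (LinearMap.pi (fun s => η s)) (LinearMap.pi θ) with hT
  suffices hsurj : LinearMap.range T = ⊤ by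
    intro x z
    have : ((x, z) : (Fin 3 → ℝ) × (Fin (2*n) → ℂ)) ∈ LinearMap.range T := by
      rw [hsurj]; trivial
    obtain ⟨v, hv⟩ := this
    refine ⟨v, fun s => ?_, fun γ => ?_⟩
    · have := congrArg (fun p => p.1 s) hv; simpa [hT] using this
    · have := congrArg (fun p => p.2 γ) hv; simpa [hT] using this
  by_contra hne
  obtain ⟨f, hf0, hfbot⟩ := Submodule.exists_dual_map_eq_bot_of_lt_top
    (lt_top_iff_ne_top.mpr hne) inferInstance
  have hker : ∀ v : V, f (T v) = 0 := by
    intro v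
    have : f (T v) ∈ Submodule.map f (LinearMap.range T) :=
      Submodule.mem_map_of_mem ⟨v, rfl⟩
    rw [hfbot] at this; simpa using this
  set r : Fin 3 → ℝ := fun s => f ((Pi.single s 1, 0)) with hr
  set a : Fin (2*n) → ℝ := fun γ => f ((0, Pi.single γ 1)) with ha
  set b : Fin (2*n) → ℝ := fun γ => f ((0, Pi.single γ Complex.I)) with hb
  have hfval : ∀ (x : Fin 3 → ℝ) (z : Fin (2*n) → ℂ),
      f (x, z) = ∑ s, x s * r s + ∑ γ, (a γ * (z γ).re + b γ * (z γ).im) := by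
    intro x z
    have hterm1 : ∀ s : Fin 3, x s • ((Pi.single s 1, 0) : (Fin 3 → ℝ) × (Fin (2*n) → ℂ))
        = ((Pi.single s (x s), 0) : (Fin 3 → ℝ) × (Fin (2*n) → ℂ)) := by
      intro s
      rw [Prod.smul_mk, smul_zero, ← Pi.single_smul', smul_eq_mul, mul_one]
    have hterm2 : ∀ γ : Fin (2*n),
        (z γ).re • ((0, Pi.single γ 1) : (Fin 3 → ℝ) × (Fin (2*n) → ℂ))
          + (z γ).im • ((0, Pi.single γ Complex.I) : (Fin 3 → ℝ) × (Fin (2*n) → ℂ))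
        = ((0, Pi.single γ (z γ)) : (Fin 3 → ℝ) × (Fin (2*n) → ℂ)) := by
      intro γ
      rw [Prod.smul_mk, Prod.smul_mk, smul_zero, smul_zero, Prod.mk_add_mk, add_zero,
        ← Pi.single_smul', ← Pi.single_smul', ← Pi.single_add, Complex.real_smul,
        Complex.real_smul, mul_one, Complex.re_add_im]
    have hxz : ((x, z) : (Fin 3 → ℝ) × (Fin (2*n) → ℂ))
        = (∑ s, x s • ((Pi.single s 1, 0) : (Fin 3 → ℝ) × (Fin (2*n) → ℂ)))
        + ∑ γ, ((z γ).re • ((0, Pi.single γ 1) : (Fin 3 → ℝ) × (Fin (2*n) → ℂ))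
            + (z γ).im • ((0, Pi.single γ Complex.I) : (Fin 3 → ℝ) × (Fin (2*n) → ℂ))) := by
      simp_rw [hterm1, hterm2]
      apply Prod.ext
      · simp only [Prod.fst_add, Prod.fst_sum]
        simp [Finset.univ_sum_single]
      · simp only [Prod.snd_add, Prod.snd_sum]
        simp [Finset.univ_sum_single]
    rw [hxz, map_add, map_sum, map_sum]
    congr 1
    · exact Finset.sum_congr rfl (fun s _ => by rw [map_smul, smul_eq_mul])
    · exact Finset.sum_congr rfl (fun γ _ => by
        rw [map_add, map_smul, map_smul, smul_eq_mul, smul_eq_mul]; ring)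
  set c : (Fin 3 ⊕ (Fin (2*n) ⊕ (Fin (2*n) ⊕ Fin 4))) → ℂ :=
    Sum.elim (fun s => (r s : ℂ))
      (Sum.elim (fun γ => ((a γ : ℂ) - Complex.I * (b γ)) / 2)
        (Sum.elim (fun γ => ((a γ : ℂ) + Complex.I * (b γ)) / 2) (fun _ => 0))) with hc
  have hzero : ∑ i, c i •
      (Sum.elim (fun s : Fin 3 => cForm (η s))
        (Sum.elim θ
          (Sum.elim (fun α : Fin (2*n) => conjForm (θ α))
            (fun j : Fin 4 => cForm (φf j)))) i) = 0 := by
    apply LinearMap.ext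
    intro v
    have hTv : T v = (fun s => η s v, fun γ => θ γ v) := rfl
    have hv := hker v
    rw [hTv, hfval] at hv
    have hvC : ((∑ s, η s v * r s + ∑ γ, (a γ * (θ γ v).re + b γ * (θ γ v).im) : ℝ) : ℂ)
        = 0 := by exact_mod_cast congrArg (fun t : ℝ => (t : ℂ)) hv
    rw [LinearMap.sum_apply, Fintype.sum_sum_type, Fintype.sum_sum_type, Fintype.sum_sum_type]
    simp only [LinearMap.smul_apply, Sum.elim_inl, Sum.elim_inr, hc, cForm, conjForm,
      LinearMap.comp_apply, AlgEquiv.toLinearMap_apply, Algebra.linearMap_apply,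
      Complex.conjAe_coe, smul_eq_mul, zero_mul, Finset.sum_const_zero, add_zero,
      LinearMap.zero_apply]
    rw [← Finset.sum_add_distrib]
    have e1 : ∀ s : Fin 3, (r s : ℂ) * (algebraMap ℝ ℂ) (η s v)
        = ((η s v * r s : ℝ) : ℂ) := by
      intro s; push_cast [Algebra.algebraMap_eq_smul_one]; simp [Complex.real_smul]; ring
    have e2 : ∀ γ : Fin (2*n),
        ((a γ : ℂ) - Complex.I * (b γ)) / 2 * θ γ v
          + ((a γ : ℂ) + Complex.I * (b γ)) / 2 * (starRingEnd ℂ) (θ γ v)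
        = ((a γ * (θ γ v).re + b γ * (θ γ v).im : ℝ) : ℂ) := by
      intro γ; exact coefident (a γ) (b γ) (θ γ v)
    rw [Finset.sum_congr rfl (fun s _ => e1 s), Finset.sum_congr rfl (fun γ _ => e2 γ)]
    rw [← Complex.ofReal_sum, ← Complex.ofReal_sum, ← Complex.ofReal_add]
    exact hvC
  have hcz := linearIndependent_iff'.mp hindep Finset.univ c hzero
  have hrz : ∀ s, r s = 0 := by
    intro s
    have := hcz (Sum.inl s) (Finset.mem_univ _)
    simpa [hc] using this
  have habz : ∀ γ, a γ = 0 ∧ b γ = 0 := by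
    intro γ
    have h1 := hcz (Sum.inr (Sum.inl γ)) (Finset.mem_univ _)
    have h2 := hcz (Sum.inr (Sum.inr (Sum.inl γ))) (Finset.mem_univ _)
    simp only [hc, Sum.elim_inr, Sum.elim_inl, div_eq_zero_iff] at h1 h2
    have h1' : (a γ : ℂ) - Complex.I * (b γ) = 0 := h1.resolve_right (by norm_num)
    have h2' : (a γ : ℂ) + Complex.I * (b γ) = 0 := h2.resolve_right (by norm_num)
    have haγ : (a γ : ℂ) = 0 := by linear_combination (h1' + h2')/2
    have hbγ : (b γ : ℂ) = 0 := by
      have : Complex.I * (b γ) = 0 := by linear_combination (h2' - h1')/2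
      rcases mul_eq_zero.mp this with h | h
      · exact absurd h Complex.I_ne_zero
      · exact h
    exact ⟨by exact_mod_cast haγ, by exact_mod_cast hbγ⟩
  apply hf0
  apply LinearMap.ext
  rintro ⟨x, z⟩
  rw [hfval]
  simp [hrz, fun γ => (habz γ).1, fun γ => (habz γ).2]
/-- uniqueness of the connection forms, pointwise-algebraic form: if
`η_s, θ^α, θ^{ᾱ}, φ₀,…,φ₃` are pointwise linearly independent 1-forms, `L_{αβ}` are
symmetric `𝔧`-invariant complex 1-forms, `M^α` complex 1-forms, `N_s` real 1-forms,
and the five 2-form identities \eqref{str-eq-dif} hold, then `L = 0`, `M = 0`, `N = 0`. -/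
theorem stmt17 (n : ℕ) (V : Type*) [AddCommGroup V] [Module ℝ V]
    (η : Fin 3 → V →ₗ[ℝ] ℝ) (θ : Fin (2*n) → V →ₗ[ℝ] ℂ) (φf : Fin 4 → V →ₗ[ℝ] ℝ)
    (hindep : LinearIndependent ℂ
      (Sum.elim (fun s : Fin 3 => cForm (η s))
        (Sum.elim θ
          (Sum.elim (fun α : Fin (2*n) => conjForm (θ α))
            (fun j : Fin 4 => cForm (φf j))))))
    (L : Fin (2*n) → Fin (2*n) → V →ₗ[ℝ] ℂ)
    (M : Fin (2*n) → V →ₗ[ℝ] ℂ)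
    (N : Fin 3 → V →ₗ[ℝ] ℝ)
    (hLsymm : ∀ α β, L α β = L β α)
    (hLjinv : ∀ α β, ∀ v : V, L α β v =
      ∑ σ, ∑ τ, piStd n σ α * piStd n τ β * (starRingEnd ℂ) (L σ τ v))
    (heq1 : ∀ α : Fin (2*n), ∀ u v : V,
      -(Complex.I * (M α u * (η 0 v : ℂ) - M α v * (η 0 u : ℂ)))
      - ∑ σ, piStd n α σ *
          ((starRingEnd ℂ) (M σ u) * ((η 1 v : ℂ) + Complex.I * (η 2 v : ℂ))
            - (starRingEnd ℂ) (M σ v) * ((η 1 u : ℂ) + Complex.I * (η 2 u : ℂ)))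
      - ∑ σ, ∑ β, piStd n α σ * (L σ β u * θ β v - L σ β v * θ β u) = 0)
    (heq2 : ∀ u v : V,
      -(∑ s, ((N s u : ℂ) * (η s v : ℂ) - (N s v : ℂ) * (η s u : ℂ)))
      - 2 * ∑ β, ((starRingEnd ℂ) (M β u) * θ β v - (starRingEnd ℂ) (M β v) * θ β u)
      - 2 * ∑ β, (M β u * (starRingEnd ℂ) (θ β v) - M β v * (starRingEnd ℂ) (θ β u)) = 0)
    (heq3 : ∀ u v : V,
      -((N 1 u : ℂ) * (η 2 v : ℂ) - (N 1 v : ℂ) * (η 2 u : ℂ))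
      + ((N 2 u : ℂ) * (η 1 v : ℂ) - (N 2 v : ℂ) * (η 1 u : ℂ))
      + 2 * Complex.I *
          ∑ β, ((starRingEnd ℂ) (M β u) * θ β v - (starRingEnd ℂ) (M β v) * θ β u)
      - 2 * Complex.I *
          ∑ β, (M β u * (starRingEnd ℂ) (θ β v) - M β v * (starRingEnd ℂ) (θ β u)) = 0)
    (heq4 : ∀ u v : V,
      -((N 2 u : ℂ) * (η 0 v : ℂ) - (N 2 v : ℂ) * (η 0 u : ℂ))
      + ((N 0 u : ℂ) * (η 2 v : ℂ) - (N 0 v : ℂ) * (η 2 u : ℂ))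
      - 2 * ∑ σ, ∑ β, piStd n σ β * (M σ u * θ β v - M σ v * θ β u)
      - 2 * ∑ σ, ∑ β, piStd n σ β *
          ((starRingEnd ℂ) (M σ u) * (starRingEnd ℂ) (θ β v)
            - (starRingEnd ℂ) (M σ v) * (starRingEnd ℂ) (θ β u)) = 0)
    (heq5 : ∀ u v : V,
      -((N 0 u : ℂ) * (η 1 v : ℂ) - (N 0 v : ℂ) * (η 1 u : ℂ))
      + ((N 1 u : ℂ) * (η 0 v : ℂ) - (N 1 v : ℂ) * (η 0 u : ℂ))
      + 2 * Complex.I * ∑ σ, ∑ β, piStd n σ β * (M σ u * θ β v - M σ v * θ β u)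
      - 2 * Complex.I * ∑ σ, ∑ β, piStd n σ β *
          ((starRingEnd ℂ) (M σ u) * (starRingEnd ℂ) (θ β v)
            - (starRingEnd ℂ) (M σ v) * (starRingEnd ℂ) (θ β u)) = 0) :
    (∀ α β, L α β = 0) ∧ (∀ α, M α = 0) ∧ (∀ s, N s = 0) := by
  classical
  have surj := dualvec n V η θ φf hindep
  have hE : ∀ t : Fin 3, ∃ v : V,
      (∀ s, η s v = if s = t then 1 else 0) ∧ (∀ γ, θ γ v = 0) := by
    intro t
    obtain ⟨v, h1, h2⟩ := surj (Pi.single t 1) 0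
    exact ⟨v, fun s => by rw [h1 s, Pi.single_apply], fun γ => h2 γ⟩
  choose E hηE hθE using hE
  have hF : ∀ γ0 : Fin (2*n), ∃ v : V,
      (∀ s, η s v = 0) ∧ (∀ γ, θ γ v = if γ = γ0 then 1 else 0) := by
    intro γ0
    obtain ⟨v, h1, h2⟩ := surj 0 (Pi.single γ0 1)
    exact ⟨v, fun s => by rw [h1 s]; rfl, fun γ => by rw [h2 γ, Pi.single_apply]⟩
  choose F hηF hθF using hF
  have hG : ∀ γ0 : Fin (2*n), ∃ v : V,
      (∀ s, η s v = 0) ∧ (∀ γ, θ γ v = if γ = γ0 then Complex.I else 0) := by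
    intro γ0
    obtain ⟨v, h1, h2⟩ := surj 0 (Pi.single γ0 Complex.I)
    exact ⟨v, fun s => by rw [h1 s]; rfl, fun γ => by rw [h2 γ, Pi.single_apply]⟩
  choose G hηG hθG using hG
  -- Step A : forms vanish on the "extra" directions
  have stepAM : ∀ u : V, (∀ s, η s u = 0) → (∀ a, θ a u = 0) → ∀ α, M α u = 0 := by
    intro u hηu hθu α
    have h := heq1 α u (E 0)
    simp [hηu, hθu, hηE, hθE] at h
    exact h
  have stepAL : ∀ u : V, (∀ s, η s u = 0) → (∀ a, θ a u = 0) → ∀ a b, L a b u = 0 := by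
    intro u hηu hθu a b
    refine piStd_cancel (fun σ => L σ b u) (fun α => ?_) a
    have h := heq1 α u (F b)
    simpa [hηu, hθu, hηF, hθF] using h
  have stepAN : ∀ u : V, (∀ s, η s u = 0) → (∀ a, θ a u = 0) → ∀ s, N s u = 0 := by
    intro u hηu hθu t
    have h := heq2 u (E t)
    simp [hηu, hθu, hηE, hθE, stepAM u hηu hθu, apply_ite (Complex.ofReal),
      mul_ite, mul_one, mul_zero, Finset.sum_ite_eq'] at h
    exact_mod_cast h
  have assemble : ∀ (X : V →ₗ[ℝ] ℂ),
      (∀ u, (∀ s, η s u = 0) → (∀ a, θ a u = 0) → X u = 0) →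
      (∀ t, X (E t) = 0) → (∀ γ, X (F γ) = 0) → (∀ γ, X (G γ) = 0) → X = 0 := by
    intro X hW hXE hXF hXG
    apply LinearMap.ext
    intro v
    set w : V := (∑ t, η t v • E t) + ∑ γ, ((θ γ v).re • F γ + (θ γ v).im • G γ) with hw
    have hη' : ∀ s, η s (v - w) = 0 := by
      intro s
      simp [hw, map_sub, map_sum, map_add, map_smul, hηE, hηF, hηG, smul_eq_mul,
        mul_ite, mul_one, mul_zero, Finset.sum_add_distrib, Finset.sum_ite_eq,
        Finset.sum_ite_eq']
    have hθ' : ∀ a, θ a (v - w) = 0 := by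
      intro a
      simp [hw, map_sub, map_sum, map_add, map_smul, hθE, hθF, hθG, Complex.real_smul,
        mul_ite, mul_one, mul_zero, Finset.sum_add_distrib, Finset.sum_ite_eq,
        Finset.sum_ite_eq', Complex.re_add_im]
    have hval := hW _ hη' hθ'
    have hXw : X v = X (v - w) + X w := by rw [map_sub]; ring
    rw [hXw, hval, hw]
    simp [map_add, map_sum, map_smul, hXE, hXF, hXG]
  -- phase M
  have F1 : ∀ (α γ : Fin (2*n)), Complex.I * M α (F γ)
      - ∑ σ, piStd n α σ * L σ γ (E 0) = 0 := by
    intro α γ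
    have h := heq1 α (E 0) (F γ)
    simp [hηE, hθE, hηF, hθF] at h
    exact h
  have F2 : ∀ (α γ : Fin (2*n)), Complex.I * M α (G γ)
      - ∑ σ, piStd n α σ * (L σ γ (E 0) * Complex.I) = 0 := by
    intro α γ
    have h := heq1 α (E 0) (G γ)
    simp [hηE, hθE, hηG, hθG] at h
    exact h
  have F3 : ∀ (α γ : Fin (2*n)), ∑ σ, piStd n α σ * (starRingEnd ℂ) (M σ (F γ))
      - ∑ σ, piStd n α σ * L σ γ (E 1) = 0 := by
    intro α γ
    have h := heq1 α (E 1) (F γ)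
    simp [hηE, hθE, hηF, hθF] at h
    exact h
  have F4 : ∀ (α γ : Fin (2*n)), ∑ σ, piStd n α σ * (starRingEnd ℂ) (M σ (G γ))
      - ∑ σ, piStd n α σ * (L σ γ (E 1) * Complex.I) = 0 := by
    intro α γ
    have h := heq1 α (E 1) (G γ)
    simp [hηE, hθE, hηG, hθG] at h
    exact h
  have F5 : ∀ (α γ : Fin (2*n)), ∑ σ, piStd n α σ * ((starRingEnd ℂ) (M σ (F γ)) * Complex.I)
      - ∑ σ, piStd n α σ * L σ γ (E 2) = 0 := by
    intro α γ
    have h := heq1 α (E 2) (F γ)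
    simp [hηE, hθE, hηF, hθF] at h
    exact h
  have F6 : ∀ α : Fin (2*n), Complex.I * M α (E 1)
      - ∑ σ, piStd n α σ * (starRingEnd ℂ) (M σ (E 0)) = 0 := by
    intro α
    have h := heq1 α (E 0) (E 1)
    simp [hηE, hθE] at h
    exact h
  have F7 : ∀ α : Fin (2*n), Complex.I * M α (E 2)
      - ∑ σ, piStd n α σ * ((starRingEnd ℂ) (M σ (E 0)) * Complex.I) = 0 := by
    intro α
    have h := heq1 α (E 0) (E 2)
    simp [hηE, hθE] at h
    exact h
  have F8 : ∀ α : Fin (2*n),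
      ∑ σ, piStd n α σ * ((starRingEnd ℂ) (M σ (E 1)) * Complex.I - (starRingEnd ℂ) (M σ (E 2))) = 0 := by
    intro α
    have h := heq1 α (E 1) (E 2)
    simp [hηE, hθE] at h
    exact h
  have hMFG : ∀ (σ γ : Fin (2*n)), (starRingEnd ℂ) (M σ (F γ)) = L σ γ (E 1) := by
    intro σ γ
    have h := piStd_cancel (fun τ => (starRingEnd ℂ) (M τ (F γ)) - L τ γ (E 1)) (fun α => by
      simp only [mul_sub, Finset.sum_sub_distrib]
      exact F3 α γ) σ
    linear_combination h
  have hMGG : ∀ (σ γ : Fin (2*n)), (starRingEnd ℂ) (M σ (G γ)) = L σ γ (E 1) * Complex.I := by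
    intro σ γ
    have h := piStd_cancel (fun τ => (starRingEnd ℂ) (M τ (G γ)) - L τ γ (E 1) * Complex.I) (fun α => by
      simp only [mul_sub, Finset.sum_sub_distrib]
      exact F4 α γ) σ
    linear_combination h
  have hMG_eq : ∀ (α γ : Fin (2*n)), M α (G γ) = Complex.I * M α (F γ) := by
    intro α γ
    have h1 := F1 α γ
    have h2 := F2 α γ
    have hS : ∑ σ, piStd n α σ * (L σ γ (E 0) * Complex.I)
        = (∑ σ, piStd n α σ * L σ γ (E 0)) * Complex.I := by
      rw [Finset.sum_mul]
      exact Finset.sum_congr rfl (fun σ _ => by ring)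
    rw [hS] at h2
    have hsum : (∑ σ, piStd n α σ * L σ γ (E 0)) = Complex.I * M α (F γ) := by
      linear_combination -h1
    rw [hsum] at h2
    apply mul_left_cancel₀ Complex.I_ne_zero
    linear_combination h2
  have hMG_eq' : ∀ (α γ : Fin (2*n)), M α (G γ) = -Complex.I * M α (F γ) := by
    intro α γ
    have e1 := hMFG α γ
    have e2 := hMGG α γ
    rw [← e1] at e2
    have h := congrArg (starRingEnd ℂ) e2
    simp only [Complex.conj_conj, map_mul, Complex.conj_I] at h
    linear_combination h
  have hMF0 : ∀ (α γ : Fin (2*n)), M α (F γ) = 0 := by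
    intro α γ
    have h : (2*Complex.I) * M α (F γ) = 0 := by
      linear_combination hMG_eq' α γ - hMG_eq α γ
    have h2I : (2*Complex.I : ℂ) ≠ 0 := by simp [Complex.I_ne_zero]
    exact (mul_eq_zero.mp h).resolve_left h2I
  have hMG0 : ∀ (α γ : Fin (2*n)), M α (G γ) = 0 := by
    intro α γ
    rw [hMG_eq α γ, hMF0 α γ, mul_zero]
  have hLE1 : ∀ (σ γ : Fin (2*n)), L σ γ (E 1) = 0 := by
    intro σ γ
    rw [← hMFG σ γ, hMF0 σ γ, map_zero]
  have hLE0 : ∀ (σ γ : Fin (2*n)), L σ γ (E 0) = 0 := by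
    intro σ γ
    refine piStd_cancel (fun τ => L τ γ (E 0)) (fun α => ?_) σ
    have h := F1 α γ
    rw [hMF0 α γ, mul_zero] at h
    linear_combination -h
  have hLE2 : ∀ (σ γ : Fin (2*n)), L σ γ (E 2) = 0 := by
    intro σ γ
    refine piStd_cancel (fun τ => L τ γ (E 2)) (fun α => ?_) σ
    have h := F5 α γ
    simp only [hMF0, map_zero, zero_mul, mul_zero, Finset.sum_const_zero, zero_sub,
      neg_eq_zero] at h
    exact h
  have hME1 : ∀ α : Fin (2*n), M α (E 1) = 0 := by
    intro α
    have h6 := F6 α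
    have h7 := F7 α
    have hS : ∑ σ, piStd n α σ * ((starRingEnd ℂ) (M σ (E 0)) * Complex.I)
        = (∑ σ, piStd n α σ * (starRingEnd ℂ) (M σ (E 0))) * Complex.I := by
      rw [Finset.sum_mul]
      exact Finset.sum_congr rfl (fun σ _ => by ring)
    rw [hS] at h7
    have hsum : (∑ σ, piStd n α σ * (starRingEnd ℂ) (M σ (E 0))) = Complex.I * M α (E 1) := by
      linear_combination -h6
    rw [hsum] at h7
    -- h7 : I * M α (E 2) - (I * M α (E 1)) * I = 0, i.e. M α (E 2) = I * M α (E 1)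
    have hE2 : M α (E 2) = Complex.I * M α (E 1) := by
      apply mul_left_cancel₀ Complex.I_ne_zero
      linear_combination h7
    have h8 := piStd_cancel
      (fun τ => (starRingEnd ℂ) (M τ (E 1)) * Complex.I - (starRingEnd ℂ) (M τ (E 2)))
      (fun β => F8 β) α
    -- h8 : conj(M α E1)*I - conj(M α E2) = 0 ⇒ M α E2 = -I * M α E1
    have h8' := congrArg (starRingEnd ℂ) (sub_eq_zero.mp h8)
    simp only [Complex.conj_conj, map_mul, Complex.conj_I] at h8'
    -- h8' : M α (E 1) * (-I) = M α (E 2)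
    have h2I : (2*Complex.I : ℂ) ≠ 0 := by simp [Complex.I_ne_zero]
    have : (2*Complex.I) * M α (E 1) = 0 := by linear_combination -hE2 - h8'
    exact (mul_eq_zero.mp this).resolve_left h2I
  have hME2 : ∀ α : Fin (2*n), M α (E 2) = 0 := by
    intro α
    have h8 := piStd_cancel
      (fun τ => (starRingEnd ℂ) (M τ (E 1)) * Complex.I - (starRingEnd ℂ) (M τ (E 2)))
      (fun β => F8 β) α
    rw [hME1 α, map_zero, zero_mul] at h8
    have := congrArg (starRingEnd ℂ) (sub_eq_zero.mp h8).symm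
    simpa using this
  have hME0 : ∀ α : Fin (2*n), M α (E 0) = 0 := by
    intro α
    have h := piStd_cancel (fun τ => (starRingEnd ℂ) (M τ (E 0))) (fun β => by
      have h6 := F6 β
      rw [hME1 β, mul_zero] at h6
      linear_combination -h6) α
    have := congrArg (starRingEnd ℂ) h
    simpa using this
  have hMall : ∀ α : Fin (2*n), M α = 0 := by
    intro α
    refine assemble (M α) (fun u h1 h2 => stepAM u h1 h2 α) (fun t => ?_) (fun γ => hMF0 α γ)
      (fun γ => hMG0 α γ)
    fin_cases t
    · exact hME0 α
    · exact hME1 α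
    · exact hME2 α
  -- phase L
  have G1 : ∀ (σ γ δ : Fin (2*n)), L σ δ (F γ) = L σ γ (F δ) := by
    intro σ γ δ
    have h := piStd_cancel (fun τ => L τ δ (F γ) - L τ γ (F δ)) (fun α => by
      simp only [mul_sub, Finset.sum_sub_distrib]
      have h := heq1 α (F δ) (F γ)
      simp [hηF, hθF, hMall, mul_sub, Finset.sum_sub_distrib, mul_ite, mul_zero,
        Finset.sum_ite_eq'] at h
      exact h) σ
    linear_combination h
  have G2 : ∀ (σ γ δ : Fin (2*n)), L σ δ (F γ) * Complex.I = L σ γ (G δ) := by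
    intro σ γ δ
    have h := piStd_cancel (fun τ => L τ δ (F γ) * Complex.I - L τ γ (G δ)) (fun α => by
      simp only [mul_sub, Finset.sum_sub_distrib]
      have h := heq1 α (G δ) (F γ)
      simp [hηF, hθF, hηG, hθG, hMall, mul_sub, Finset.sum_sub_distrib, mul_ite, mul_zero,
        Finset.sum_ite_eq'] at h
      exact h) σ
    linear_combination h
  have hLB : ∀ (σ γ δ : Fin (2*n)), L σ γ (F δ) + Complex.I * L σ γ (G δ) = 0 := by
    intro σ γ δ
    have h1 := G1 σ γ δ
    have h2 := G2 σ γ δ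
    linear_combination (-Complex.I) * h2 + (Complex.I*Complex.I) * h1
      + (L σ γ (F δ)) * Complex.I_sq
  have hLA : ∀ (α β γ : Fin (2*n)), L α β (F γ) - Complex.I * L α β (G γ) = 0 := by
    intro α β γ
    rw [hLjinv α β (F γ), hLjinv α β (G γ), Finset.mul_sum, ← Finset.sum_sub_distrib]
    apply Finset.sum_eq_zero
    intro σ _
    rw [Finset.mul_sum, ← Finset.sum_sub_distrib]
    apply Finset.sum_eq_zero
    intro τ _
    have hc := congrArg (starRingEnd ℂ) (hLB σ τ γ)
    simp only [map_add, map_mul, Complex.conj_I, map_zero] at hc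
    linear_combination (piStd n σ α * piStd n τ β) * hc
  have h2I : (2*Complex.I : ℂ) ≠ 0 := by simp [Complex.I_ne_zero]
  have hLF0 : ∀ (α β γ : Fin (2*n)), L α β (F γ) = 0 := by
    intro α β γ
    linear_combination (hLA α β γ + hLB α β γ)/2
  have hLG0 : ∀ (α β γ : Fin (2*n)), L α β (G γ) = 0 := by
    intro α β γ
    have h : (2*Complex.I) * L α β (G γ) = 0 := by
      linear_combination hLB α β γ - hLA α β γ
    exact (mul_eq_zero.mp h).resolve_left h2I
  have hLall : ∀ (α β : Fin (2*n)), L α β = 0 := by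
    intro α β
    refine assemble (L α β) (fun u h1 h2 => stepAL u h1 h2 α β) (fun t => ?_)
      (fun γ => hLF0 α β γ) (fun γ => hLG0 α β γ)
    fin_cases t
    · exact hLE0 α β
    · exact hLE1 α β
    · exact hLE2 α β
  -- phase N
  have hNF0 : ∀ (t : Fin 3) (γ : Fin (2*n)), N t (F γ) = 0 := by
    intro t γ
    have h := heq2 (E t) (F γ)
    simp [hηE, hθE, hηF, hθF, hMall, apply_ite (Complex.ofReal), mul_ite, mul_one,
      mul_zero, Finset.sum_ite_eq'] at h
    exact_mod_cast h
  have hNG0 : ∀ (t : Fin 3) (γ : Fin (2*n)), N t (G γ) = 0 := by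
    intro t γ
    have h := heq2 (E t) (G γ)
    simp [hηE, hθE, hηG, hθG, hMall, apply_ite (Complex.ofReal), mul_ite, mul_one,
      mul_zero, Finset.sum_ite_eq'] at h
    exact_mod_cast h
  have q1 : N 2 (E 0) = 0 := by
    have h := heq3 (E 0) (E 1); simp [hηE, hθE, hMall] at h; exact_mod_cast h
  have q2 : N 1 (E 0) = 0 := by
    have h := heq3 (E 0) (E 2); simp [hηE, hθE, hMall] at h; exact_mod_cast h
  have q3' : N 1 (E 1) + N 2 (E 2) = 0 := by
    have h := heq3 (E 1) (E 2); simp [hηE, hθE, hMall] at h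
    have h' : -(N 1 (E 1)) + -(N 2 (E 2)) = 0 := by exact_mod_cast h
    linarith
  have q4 : N 2 (E 1) = 0 := by
    have h := heq4 (E 1) (E 0); simp [hηE, hθE, hMall] at h; exact_mod_cast h
  have q5 : N 0 (E 1) = 0 := by
    have h := heq4 (E 1) (E 2); simp [hηE, hθE, hMall] at h; exact_mod_cast h
  have q6' : N 2 (E 2) + N 0 (E 0) = 0 := by
    have h := heq4 (E 2) (E 0); simp [hηE, hθE, hMall] at h
    have h' : -(N 2 (E 2)) + -(N 0 (E 0)) = 0 := by exact_mod_cast h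
    linarith
  have q7 : N 0 (E 2) = 0 := by
    have h := heq5 (E 2) (E 1); simp [hηE, hθE, hMall] at h; exact_mod_cast h
  have q8 : N 1 (E 2) = 0 := by
    have h := heq5 (E 2) (E 0); simp [hηE, hθE, hMall] at h; exact_mod_cast h
  have q9' : N 0 (E 0) + N 1 (E 1) = 0 := by
    have h := heq5 (E 0) (E 1); simp [hηE, hθE, hMall] at h
    have h' : -(N 0 (E 0)) + -(N 1 (E 1)) = 0 := by exact_mod_cast h
    linarith
  have d0 : N 0 (E 0) = 0 := by linarith
  have d1 : N 1 (E 1) = 0 := by linarith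
  have d2 : N 2 (E 2) = 0 := by linarith
  have hNE0 : ∀ (t r : Fin 3), N t (E r) = 0 := by
    intro t r
    fin_cases t <;> fin_cases r <;>
      first
        | exact d0 | exact d1 | exact d2 | exact q1 | exact q2 | exact q4
        | exact q5 | exact q7 | exact q8
  have hNall : ∀ s : Fin 3, N s = 0 := by
    intro s
    have hc : cForm (N s) = 0 := by
      refine assemble (cForm (N s)) (fun u h1 h2 => ?_) (fun t => ?_) (fun γ => ?_)
        (fun γ => ?_)
      · simp [cForm, stepAN u h1 h2 s]
      · simp [cForm, hNE0 s t]
      · simp [cForm, hNF0 s γ]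
      · simp [cForm, hNG0 s γ]
    apply LinearMap.ext
    intro v
    have := congrArg (fun g : V →ₗ[ℝ] ℂ => g v) hc
    simp [cForm] at this
    simpa using this
  exact ⟨hLall, hMall, hNall⟩
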